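/- Let p ≥ 2 be an integer, q := exp(iπ/p) ∈ ℂ, and let ξ ∈ ℂ be nonzero. Let V be the ℂ-vector space with basis v₁, v₂ and let Ψ : V⊗V → V⊗V be the ℂ-linear map determined by Ψ(v_i ⊗ v_j) = q_{ij}·v_j ⊗ v_i, where q₁₁ = −1, q₁₂ = ξ⁻¹q⁻¹, q₂₁ = ξq⁻¹, q₂₂ = q². On V⊗V⊗V set Ψ₁ := Ψ⊗id and Ψ₂ := id⊗Ψ. Then the element w := ξ²·v₁⊗v₂⊗v₂ − ξ(q + q⁻¹)·v₂⊗v₁⊗v₂ + v₂⊗v₂⊗v₁ satisfies both (id + Ψ₁ + Ψ₁∘Ψ₂)(w) = 0 and (id + Ψ₂ + Ψ₂∘Ψ₁)(w) = 0. -/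

import Mathlib

open scoped TensorProduct

/-- the dual Serre element is annihilated by both partial braided
symmetrizers `id + Ψ₁ + Ψ₁Ψ₂` and `id + Ψ₂ + Ψ₂Ψ₁` for the asymmetric diagonal
braiding. -/
theorem dual_serre_element_killed_by_partial_symmetrizers
    (p : ℕ) (hp : 2 ≤ p)
    (q : ℂ) (hq : q = Complex.exp ((Real.pi : ℂ) * Complex.I / p))
    (ξ : ℂ) (hξ : ξ ≠ 0)
    (V : Type*) [AddCommGroup V] [Module ℂ V] (v : Module.Basis (Fin 2) ℂ V)
    (Ψ : V ⊗[ℂ] V →ₗ[ℂ] V ⊗[ℂ] V)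
    (hΨ00 : Ψ (v 0 ⊗ₜ[ℂ] v 0) = (-1 : ℂ) • (v 0 ⊗ₜ[ℂ] v 0))
    (hΨ01 : Ψ (v 0 ⊗ₜ[ℂ] v 1) = (ξ⁻¹ * q⁻¹) • (v 1 ⊗ₜ[ℂ] v 0))
    (hΨ10 : Ψ (v 1 ⊗ₜ[ℂ] v 0) = (ξ * q⁻¹) • (v 0 ⊗ₜ[ℂ] v 1))
    (hΨ11 : Ψ (v 1 ⊗ₜ[ℂ] v 1) = q ^ 2 • (v 1 ⊗ₜ[ℂ] v 1))
    (Ψ₁ Ψ₂ : V ⊗[ℂ] (V ⊗[ℂ] V) →ₗ[ℂ] V ⊗[ℂ] (V ⊗[ℂ] V))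
    (hΨ₁ : Ψ₁ = (TensorProduct.assoc ℂ V V V).toLinearMap ∘ₗ
      LinearMap.rTensor V Ψ ∘ₗ (TensorProduct.assoc ℂ V V V).symm.toLinearMap)
    (hΨ₂ : Ψ₂ = LinearMap.lTensor V Ψ)
    (w : V ⊗[ℂ] (V ⊗[ℂ] V))
    (hw : w = ξ ^ 2 • (v 0 ⊗ₜ[ℂ] (v 1 ⊗ₜ[ℂ] v 1))
      - (ξ * (q + q⁻¹)) • (v 1 ⊗ₜ[ℂ] (v 0 ⊗ₜ[ℂ] v 1))
      + v 1 ⊗ₜ[ℂ] (v 1 ⊗ₜ[ℂ] v 0)) :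
    ((LinearMap.id : V ⊗[ℂ] (V ⊗[ℂ] V) →ₗ[ℂ] V ⊗[ℂ] (V ⊗[ℂ] V)) + Ψ₁ + Ψ₁ ∘ₗ Ψ₂) w = 0 ∧
    ((LinearMap.id : V ⊗[ℂ] (V ⊗[ℂ] V) →ₗ[ℂ] V ⊗[ℂ] (V ⊗[ℂ] V)) + Ψ₂ + Ψ₂ ∘ₗ Ψ₁) w = 0 := by
  have hq0 : q ≠ 0 := by rw [hq]; exact Complex.exp_ne_zero _
  subst hΨ₁ hΨ₂ hw
  constructor <;>
  · simp only [LinearMap.add_apply, LinearMap.id_apply, LinearMap.comp_apply,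
      map_add, map_sub, map_smul, LinearEquiv.coe_coe,
      TensorProduct.assoc_symm_tmul, TensorProduct.assoc_tmul,
      LinearMap.rTensor_tmul, LinearMap.lTensor_tmul,
      TensorProduct.smul_tmul, TensorProduct.tmul_smul, smul_smul,
      hΨ00, hΨ01, hΨ10, hΨ11]
    match_scalars <;> field_simp <;> ring
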